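/- Suppose f : X → E is G-fixed. Then f generates Map(X,E) as an E[N]-module (i.e., for every m : X → E there exists z ∈ E[N] with z • f = m) if and only if every G-fixed m : X → E has the form m = z • f for some G-fixed z ∈ E[N]. (Lemma 3.1: an element f ∈ M^G is an E[N]^G-generator of M^G if and only if it is an E[N]-generator of M.) -/

import Mathlib

/-- The action of the group algebra `E[N]` of a subgroup `N ≤ Perm X` on `Map(X, E)`:
`(η • f)(y) = f(η⁻¹ y)`, extended `E`-linearly. -/
noncomputable def permAct {E X : Type*} [Field E]
    (N : Subgroup (Equiv.Perm X))
    (z : MonoidAlgebra E ↥N) (f : X → E) : X → E :=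
  fun y => Finsupp.sum z.coeff fun η c => c * f ((η : Equiv.Perm X)⁻¹ y)

/-- `f : X → E` is fixed by the semilinear action of `G = Gal(E/K)` on `Map(X, E)` given by
`(g · f)(y) = g (f ((ρ g)⁻¹ y))`. -/
def IsGFixedFun {K E X : Type*} [Field K] [Field E] [Algebra K E]
    (ρ : (E ≃ₐ[K] E) →* Equiv.Perm X) (f : X → E) : Prop :=
  ∀ (g : E ≃ₐ[K] E) (y : X), g (f ((ρ g)⁻¹ y)) = f y

/-- `z ∈ E[N]` is fixed by the action of `G = Gal(E/K)` on the group algebra `E[N]`, where `G`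
acts on coefficients as Galois automorphisms and on `N` by conjugation via `ρ`. -/
def IsGFixedAlg {K E X : Type*} [Field K] [Field E] [Algebra K E]
    (ρ : (E ≃ₐ[K] E) →* Equiv.Perm X) (N : Subgroup (Equiv.Perm X))
    (z : MonoidAlgebra E ↥N) : Prop :=
  ∀ (g : E ≃ₐ[K] E) (η : Equiv.Perm X) (h : η ∈ N) (h' : ρ g * η * (ρ g)⁻¹ ∈ N),
    g (z.coeff ⟨η, h⟩) = z.coeff ⟨ρ g * η * (ρ g)⁻¹, h'⟩



open Module

section Semilinear

variable {K E : Type*} [Field K] [Field E] [Algebra K E]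
variable {V : Type*} [AddCommGroup V] [Module K V] [Module E V] [IsScalarTower K E V]
variable (σ : (E ≃ₐ[K] E) → V → V)

/-- The `K`-submodule of vectors fixed by a semilinear action. -/
def fixedPts (hadd : ∀ g v w, σ g (v + w) = σ g v + σ g w)
    (hsmul : ∀ g (c : E) v, σ g (c • v) = g c • σ g v) : Submodule K V where
  carrier := {v | ∀ g, σ g v = v}
  add_mem' := fun ha hb g => by rw [hadd, ha, hb]
  zero_mem' := fun g => by
    have h := hsmul g 0 0
    simpa using h
  smul_mem' := fun k v hv g => by
    rw [← algebraMap_smul E k v, hsmul, AlgEquiv.commutes, hv, algebraMap_smul]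

variable (hadd : ∀ g v w, σ g (v + w) = σ g v + σ g w)
    (hsmul : ∀ g (c : E) v, σ g (c • v) = g c • σ g v)
    (hone : ∀ v, σ 1 v = v)
    (hmul : ∀ g h v, σ (g * h) v = σ g (σ h v))

include hadd in
theorem sigma_sum (g : E ≃ₐ[K] E) {α : Type*} (t : Finset α) (f : α → V) :
    σ g (∑ a ∈ t, f a) = ∑ a ∈ t, σ g (f a) :=
  map_sum (AddMonoidHom.mk' (σ g) (fun a b => hadd g a b)) f t

variable [FiniteDimensional K E] [IsGalois K E]

include hadd hsmul hone hmul in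
theorem span_fixedPts_eq_top :
    Submodule.span E (fixedPts σ hadd hsmul : Set V) = ⊤ := by
  set W := Submodule.span E (fixedPts σ hadd hsmul : Set V) with hW
  by_contra hne
  obtain ⟨v, hv⟩ : ∃ v : V, v ∉ W := by
    by_contra h; push_neg at h; exact hne (eq_top_iff.2 fun x _ => h x)
  have hq : W.mkQ v ≠ 0 := by
    simpa [Submodule.Quotient.mk_eq_zero] using hv
  obtain ⟨ψ, hψ⟩ : ∃ ψ : Module.Dual E (V ⧸ W), ψ (W.mkQ v) ≠ 0 := by
    by_contra h; push_neg at h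
    exact hq ((Module.forall_dual_apply_eq_zero_iff E _).1 h)
  set φ : V →ₗ[E] E := ψ.comp W.mkQ with hφ
  have hφW : ∀ w ∈ W, φ w = 0 := by
    intro w hw
    have : W.mkQ w = 0 := (Submodule.Quotient.mk_eq_zero _).2 hw
    simp [hφ, this]
  have hφv : φ v ≠ 0 := hψ
  have key : ∀ c : E, ∑ g : E ≃ₐ[K] E, φ (σ g v) * g c = 0 := by
    intro c
    have hfix : (∑ g : E ≃ₐ[K] E, σ g (c • v)) ∈ fixedPts σ hadd hsmul := by
      intro h
      have h1 : σ h (∑ g : E ≃ₐ[K] E, σ g (c • v)) =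
          ∑ g : E ≃ₐ[K] E, σ (h * g) (c • v) := by
        rw [sigma_sum σ hadd]
        exact Finset.sum_congr rfl fun g _ => (hmul h g (c • v)).symm
      rw [h1]
      exact Fintype.sum_bijective (fun g => h * g)
        (Group.mulLeft_bijective h) _ _ (fun g => rfl)
    have h0 : φ (∑ g : E ≃ₐ[K] E, σ g (c • v)) = 0 :=
      hφW _ (Submodule.subset_span hfix)
    rw [map_sum] at h0
    rw [← h0]
    refine Finset.sum_congr rfl fun g _ => ?_
    rw [hsmul g c v, map_smul, smul_eq_mul, mul_comm]
  have hinj : Function.Injective (fun g : E ≃ₐ[K] E => (g : E →* E)) := by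
    intro g g' hgg'
    ext x
    exact DFunLike.congr_fun hgg' x
  have li : LinearIndependent E (fun g : E ≃ₐ[K] E => ((g : E →* E) : E → E)) :=
    (linearIndependent_monoidHom E E).comp _ hinj
  have hall := Fintype.linearIndependent_iff.1 li (fun g => φ (σ g v)) ?_ 1
  · rw [hone v] at hall
    exact hφv hall
  · funext c
    have := key c
    simpa [Finset.sum_apply] using this

include hadd hsmul hone hmul in
theorem linearIndependent_of_fixedPts {ι : Type*} (b : ι → V)
    (hbfix : ∀ i, b i ∈ fixedPts σ hadd hsmul)
    (hb : LinearIndependent K b) : LinearIndependent E b := by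
  rw [linearIndependent_iff'] at hb ⊢
  intro s c hsum i hi
  have key : ∀ β : E, Algebra.trace K E (β * c i) = 0 := by
    intro β
    have h1 : ∀ g : E ≃ₐ[K] E,
        σ g (β • ∑ j ∈ s, c j • b j) = ∑ j ∈ s, g (β * c j) • b j := by
      intro g
      rw [Finset.smul_sum]
      have hc : ∀ j ∈ s, β • c j • b j = (β * c j) • b j := fun j _ => smul_smul β (c j) (b j)
      rw [Finset.sum_congr rfl hc, sigma_sum σ hadd]
      exact Finset.sum_congr rfl fun j _ => by rw [hsmul, hbfix j g]
    have h2 : (0 : V) = ∑ j ∈ s, Algebra.trace K E (β * c j) • b j := by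
      have h3 : (0 : V) = ∑ g : E ≃ₐ[K] E, σ g (β • ∑ j ∈ s, c j • b j) := by
        rw [hsum]
        have hz : ∀ g : E ≃ₐ[K] E, σ g ((0 : E) • (0 : V)) = 0 := fun g => by
          rw [hsmul]; simp
        simp only [smul_zero]
        have hz' : ∀ g : E ≃ₐ[K] E, σ g (0 : V) = 0 := fun g => by
          have := hz g; rwa [zero_smul] at this
        simp [hz']
      rw [h3, Finset.sum_congr rfl fun g _ => h1 g, Finset.sum_comm]
      refine Finset.sum_congr rfl fun j _ => ?_
      rw [← Finset.sum_smul, ← trace_eq_sum_automorphisms, algebraMap_smul]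
    exact hb s (fun j => Algebra.trace K E (β * c j)) h2.symm i hi
  refine (traceForm_nondegenerate K E).1 (c i) fun β => ?_
  rw [Algebra.traceForm_apply, mul_comm]
  exact key β

variable [FiniteDimensional E V]

include hadd hsmul hone hmul in
theorem finrank_le_finrank_fixedPts :
    finrank E V ≤ finrank K (fixedPts σ hadd hsmul) := by
  haveI : FiniteDimensional K V := FiniteDimensional.trans K E V
  set F := fixedPts σ hadd hsmul with hF
  let b := finBasis K F
  have hspan : Submodule.span E (Set.range fun i => ((b i : F) : V)) = ⊤ := by
    rw [eq_top_iff, ← span_fixedPts_eq_top σ hadd hsmul hone hmul]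
    refine Submodule.span_le.2 fun w hw => ?_
    have h1 : (⟨w, hw⟩ : F) ∈ Submodule.span K (Set.range b) := by
      rw [b.span_eq]; trivial
    have h2 : w ∈ Submodule.map F.subtype (Submodule.span K (Set.range b)) :=
      ⟨⟨w, hw⟩, h1, rfl⟩
    rw [Submodule.map_span] at h2
    have h3 : F.subtype '' Set.range b = Set.range fun i => ((b i : F) : V) := by
      ext x
      constructor
      · rintro ⟨y, ⟨i, rfl⟩, rfl⟩; exact ⟨i, rfl⟩
      · rintro ⟨i, rfl⟩; exact ⟨b i, ⟨i, rfl⟩, rfl⟩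
    rw [h3] at h2
    exact Submodule.span_subset_span K E _ h2
  simpa using finrank_le_of_span_eq_top hspan

include hadd hsmul hone hmul in
theorem finrank_fixed_sub_le (Q : Submodule E V) (P : Submodule K V)
    (hPfix : ∀ v ∈ P, ∀ g, σ g v = v) (hPQ : ∀ v ∈ P, v ∈ Q) :
    finrank K P ≤ finrank E Q := by
  haveI : FiniteDimensional K V := FiniteDimensional.trans K E V
  let b := finBasis K P
  have h1 : LinearIndependent K (fun i => ((b i : P) : V)) :=
    b.linearIndependent.map' P.subtype (Submodule.ker_subtype P)
  have h2 : LinearIndependent E (fun i => ((b i : P) : V)) :=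
    linearIndependent_of_fixedPts σ hadd hsmul hone hmul _
      (fun i => hPfix _ (b i).2) h1
  let w : Fin (finrank K P) → Q := fun i => ⟨(b i : V), hPQ _ (b i).2⟩
  have h3 : LinearIndependent E w := by
    refine LinearIndependent.of_comp Q.subtype ?_
    exact h2
  have h4 := h3.fintype_card_le_finrank
  simpa using h4

end Semilinear

section Surj

variable {K E : Type*} [Field K] [Field E] [Algebra K E]
    [FiniteDimensional K E] [IsGalois K E]
variable {V W : Type*} [AddCommGroup V] [Module K V] [Module E V] [IsScalarTower K E V]
    [AddCommGroup W] [Module K W] [Module E W] [IsScalarTower K E W]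
    [FiniteDimensional E V] [FiniteDimensional E W]

theorem surjOn_fixedPts (σV : (E ≃ₐ[K] E) → V → V) (σW : (E ≃ₐ[K] E) → W → W)
    (haddV : ∀ g v w, σV g (v + w) = σV g v + σV g w)
    (hsmulV : ∀ g (c : E) v, σV g (c • v) = g c • σV g v)
    (honeV : ∀ v, σV 1 v = v)
    (hmulV : ∀ g h v, σV (g * h) v = σV g (σV h v))
    (haddW : ∀ g v w, σW g (v + w) = σW g v + σW g w)
    (hsmulW : ∀ g (c : E) v, σW g (c • v) = g c • σW g v)
    (honeW : ∀ v, σW 1 v = v)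
    (hmulW : ∀ g h v, σW (g * h) v = σW g (σW h v))
    (φ : V →ₗ[E] W) (hequiv : ∀ g v, φ (σV g v) = σW g (φ v))
    (hsurj : Function.Surjective φ)
    (w : W) (hw : ∀ g, σW g w = w) : ∃ v, (∀ g, σV g v = v) ∧ φ v = w := by
  haveI : FiniteDimensional K V := FiniteDimensional.trans K E V
  haveI : FiniteDimensional K W := FiniteDimensional.trans K E W
  set FV := fixedPts σV haddV hsmulV with hFV
  set FW := fixedPts σW haddW hsmulW with hFW
  set φK := φ.restrictScalars K with hφK
  have hres : ∀ v ∈ FV, φK v ∈ FW := by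
    intro v hv g
    show σW g (φ v) = φ v
    rw [← hequiv, hv g]
  set ψ : FV →ₗ[K] FW := φK.restrict hres with hψ
  have hψval : ∀ x : FV, (ψ x : W) = φ (x : V) := fun x => rfl
  -- dimension bookkeeping
  have e1 : finrank K (LinearMap.range ψ) + finrank K (LinearMap.ker ψ) = finrank K FV :=
    LinearMap.finrank_range_add_finrank_ker ψ
  have e2 : finrank E W + finrank E (LinearMap.ker φ) = finrank E V := by
    have := LinearMap.finrank_range_add_finrank_ker φ
    rwa [LinearMap.range_eq_top.2 hsurj, finrank_top] at this
  have e3 : finrank E V ≤ finrank K FV :=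
    finrank_le_finrank_fixedPts σV haddV hsmulV honeV hmulV
  have e4 : finrank K (LinearMap.ker ψ) ≤ finrank E (LinearMap.ker φ) := by
    rw [← Submodule.finrank_map_subtype_eq FV (LinearMap.ker ψ)]
    refine finrank_fixed_sub_le σV haddV hsmulV honeV hmulV (LinearMap.ker φ)
      ((LinearMap.ker ψ).map FV.subtype) ?_ ?_
    · rintro v ⟨⟨x, hx⟩, -, rfl⟩
      exact hx
    · rintro v ⟨⟨x, hx⟩, hker, rfl⟩
      have : (ψ ⟨x, hx⟩ : W) = 0 := by
        rw [(LinearMap.mem_ker).1 hker]; rfl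
      rw [hψval] at this
      exact LinearMap.mem_ker.2 this
  have e5 : finrank K FW ≤ finrank E W := by
    have := finrank_fixed_sub_le σW haddW hsmulW honeW hmulW (⊤ : Submodule E W) FW
      (fun v hv g => hv g) (fun v _ => Submodule.mem_top)
    rwa [finrank_top] at this
  have hrange : LinearMap.range ψ = ⊤ := by
    refine Submodule.eq_of_le_of_finrank_le le_top ?_
    rw [finrank_top]
    omega
  have hmem : (⟨w, hw⟩ : FW) ∈ LinearMap.range ψ := by rw [hrange]; trivial
  obtain ⟨⟨v, hv⟩, hveq⟩ := hmem
  exact ⟨v, hv, congrArg Subtype.val hveq⟩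

end Surj

section Concrete

variable {K E X : Type*} [Field K] [Field E] [Algebra K E]
variable (ρ : (E ≃ₐ[K] E) →* Equiv.Perm X) (N : Subgroup (Equiv.Perm X))
variable (hnorm : ∀ (g : E ≃ₐ[K] E) (η : Equiv.Perm X), η ∈ N ↔ ρ g * η * (ρ g)⁻¹ ∈ N)

/-- Conjugation by `ρ g` as a bijection of `N`. -/
def conjN (g : E ≃ₐ[K] E) : ↥N ≃ ↥N where
  toFun η := ⟨ρ g * η * (ρ g)⁻¹, (hnorm g η).1 η.2⟩
  invFun η := ⟨(ρ g)⁻¹ * η * ρ g, by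
    refine (hnorm g ((ρ g)⁻¹ * ↑η * ρ g)).2 ?_
    have h : ρ g * ((ρ g)⁻¹ * ↑η * ρ g) * (ρ g)⁻¹ = ↑η := by group
    rw [h]; exact η.2⟩
  left_inv η := by ext; simp
  right_inv η := by ext; simp

/-- The semilinear action of `Gal(E/K)` on the group algebra `E[N]`. -/
noncomputable def algAct (g : E ≃ₐ[K] E) (z : MonoidAlgebra E ↥N) : MonoidAlgebra E ↥N :=
  MonoidAlgebra.ofCoeff (Finsupp.equivMapDomain (conjN ρ N hnorm g) (Finsupp.mapRange (⇑g) (map_zero g) z.coeff))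

theorem algAct_apply (g : E ≃ₐ[K] E) (z : MonoidAlgebra E ↥N) (η : ↥N) :
    (algAct ρ N hnorm g z).coeff η = g (z.coeff ((conjN ρ N hnorm g).symm η)) := rfl

theorem algAct_add (g : E ≃ₐ[K] E) (z w : MonoidAlgebra E ↥N) :
    algAct ρ N hnorm g (z + w) = algAct ρ N hnorm g z + algAct ρ N hnorm g w := by
  ext η
  rw [MonoidAlgebra.coeff_add, Finsupp.add_apply, algAct_apply, algAct_apply, algAct_apply, MonoidAlgebra.coeff_add, Finsupp.add_apply, map_add]

theorem algAct_smul (g : E ≃ₐ[K] E) (c : E) (z : MonoidAlgebra E ↥N) :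
    algAct ρ N hnorm g (c • z) = g c • algAct ρ N hnorm g z := by
  ext η
  rw [MonoidAlgebra.coeff_smul, Finsupp.smul_apply, algAct_apply, algAct_apply, MonoidAlgebra.coeff_smul, Finsupp.smul_apply, smul_eq_mul,
    smul_eq_mul, map_mul]

theorem algAct_one (z : MonoidAlgebra E ↥N) : algAct ρ N hnorm 1 z = z := by
  ext η
  rw [algAct_apply]
  have h1 : (conjN ρ N hnorm 1).symm η = η := by
    ext; simp [conjN]
  rw [h1]
  rfl

theorem algAct_mul (g h : E ≃ₐ[K] E) (z : MonoidAlgebra E ↥N) :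
    algAct ρ N hnorm (g * h) z = algAct ρ N hnorm g (algAct ρ N hnorm h z) := by
  ext η
  rw [algAct_apply, algAct_apply, algAct_apply]
  have h1 : (conjN ρ N hnorm (g * h)).symm η
      = (conjN ρ N hnorm h).symm ((conjN ρ N hnorm g).symm η) := by
    ext; simp [conjN, mul_assoc]
  rw [h1]
  rfl

/-- The semilinear action of `Gal(E/K)` on `Map(X, E)`. -/
def funAct (g : E ≃ₐ[K] E) (m : X → E) : X → E := fun y => g (m ((ρ g)⁻¹ y))

theorem funAct_add (g : E ≃ₐ[K] E) (m₁ m₂ : X → E) :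
    funAct ρ g (m₁ + m₂) = funAct ρ g m₁ + funAct ρ g m₂ := by
  funext y; simp [funAct]

theorem funAct_smul (g : E ≃ₐ[K] E) (c : E) (m : X → E) :
    funAct ρ g (c • m) = g c • funAct ρ g m := by
  funext y; simp [funAct, smul_eq_mul]

theorem funAct_one (m : X → E) : funAct ρ 1 m = m := by
  funext y; simp [funAct]

theorem funAct_mul (g h : E ≃ₐ[K] E) (m : X → E) :
    funAct ρ (g * h) m = funAct ρ g (funAct ρ h m) := by
  funext y; simp [funAct, mul_assoc]

theorem isGFixedFun_iff (m : X → E) :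
    IsGFixedFun ρ m ↔ ∀ g, funAct ρ g m = m := by
  constructor
  · intro hm g; funext y; exact hm g y
  · intro hm g y; exact congrFun (hm g) y

theorem isGFixedAlg_iff (z : MonoidAlgebra E ↥N) :
    IsGFixedAlg ρ N z ↔ ∀ g, algAct ρ N hnorm g z = z := by
  constructor
  · intro hz g
    ext η
    rw [algAct_apply]
    set η₀ := (conjN ρ N hnorm g).symm η with hη₀
    have h1 : conjN ρ N hnorm g η₀ = η := Equiv.apply_symm_apply _ _
    have h2 := hz g (η₀ : Equiv.Perm X) η₀.2 ((hnorm g _).1 η₀.2)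
    have h3 : (⟨(η₀ : Equiv.Perm X), η₀.2⟩ : ↥N) = η₀ := rfl
    rw [h3] at h2
    rw [h2]
    exact congrArg z.coeff (Subtype.ext (congrArg Subtype.val h1))
  · intro hz g η hη hη'
    have h1 : (algAct ρ N hnorm g z).coeff (conjN ρ N hnorm g ⟨η, hη⟩)
        = z.coeff (conjN ρ N hnorm g ⟨η, hη⟩) := by rw [hz g]
    rw [algAct_apply, Equiv.symm_apply_apply] at h1
    rw [h1]
    exact congrArg z.coeff (Subtype.ext rfl)

end Concrete

section Phi

variable {K E X : Type*} [Field K] [Field E] [Algebra K E]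
variable (ρ : (E ≃ₐ[K] E) →* Equiv.Perm X) (N : Subgroup (Equiv.Perm X))
variable (hnorm : ∀ (g : E ≃ₐ[K] E) (η : Equiv.Perm X), η ∈ N ↔ ρ g * η * (ρ g)⁻¹ ∈ N)

/-- `z ↦ z • f` as an `E`-linear map `E[N] → Map(X, E)`. -/
noncomputable def permActHom (f : X → E) : MonoidAlgebra E ↥N →ₗ[E] (X → E) where
  toFun z := permAct N z f
  map_add' z w := by
    funext y
    have h : Finsupp.sum (z + w).coeff (fun η c => c * f ((η : Equiv.Perm X)⁻¹ y))
        = Finsupp.sum z.coeff (fun η c => c * f ((η : Equiv.Perm X)⁻¹ y))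
          + Finsupp.sum w.coeff (fun η c => c * f ((η : Equiv.Perm X)⁻¹ y)) :=
      Finsupp.sum_add_index' (fun η => zero_mul _) (fun η b₁ b₂ => add_mul _ _ _)
    exact h
  map_smul' c z := by
    funext y
    have h : Finsupp.sum (c • z).coeff (fun η b => b * f ((η : Equiv.Perm X)⁻¹ y))
        = c * Finsupp.sum z.coeff (fun η b => b * f ((η : Equiv.Perm X)⁻¹ y)) := by
      refine Eq.trans (Finsupp.sum_smul_index' (g := z.coeff) (b := c) ?_) ?_
      · exact fun η => zero_mul _
      · rw [Finsupp.mul_sum]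
        exact Finsupp.sum_congr fun η _ => by rw [smul_eq_mul, mul_assoc]
    exact h

theorem permActHom_equivariant (f : X → E) (hf : IsGFixedFun ρ f)
    (g : E ≃ₐ[K] E) (z : MonoidAlgebra E ↥N) :
    permActHom N f (algAct ρ N hnorm g z) = funAct ρ g (permActHom N f z) := by
  have hf' : ∀ x : X, g (f x) = f (ρ g x) := by
    intro x
    have := hf g (ρ g x)
    rwa [Equiv.Perm.inv_def, Equiv.symm_apply_apply] at this
  funext y
  have h : Finsupp.sum
        (Finsupp.equivMapDomain (conjN ρ N hnorm g) (Finsupp.mapRange (⇑g) (map_zero g) z.coeff))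
        (fun η c => c * f ((η : Equiv.Perm X)⁻¹ y))
      = g (Finsupp.sum z.coeff (fun η c => c * f ((η : Equiv.Perm X)⁻¹ ((ρ g)⁻¹ y)))) := by
    rw [Finsupp.sum_equivMapDomain]
    refine Eq.trans (Finsupp.sum_mapRange_index ?_) ?_
    · exact fun a => zero_mul _
    rw [map_finsuppSum]
    refine Finsupp.sum_congr fun η _ => ?_
    rw [map_mul, hf']
    have h3 : ((conjN ρ N hnorm g η : Equiv.Perm X))⁻¹ y
        = ρ g ((η : Equiv.Perm X)⁻¹ ((ρ g)⁻¹ y)) := by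
      show ((ρ g * (η : Equiv.Perm X) * (ρ g)⁻¹)⁻¹) y = _
      simp [Equiv.Perm.mul_apply]
    rw [h3]
  exact h

end Phi

/-- Lemma 3.1: for a regular subgroup `N ≤ Perm X` normalized by `ρ(G)` and a `G`-fixed
`f : X → E`, the element `f` is an `E[N]^G`-generator of `Map(X,E)^G` if and only if it is an
`E[N]`-generator of `Map(X,E)`. -/
theorem fixed_generator_iff_generator
    {K E X : Type*} [Field K] [Field E] [Algebra K E]
    [FiniteDimensional K E] [IsGalois K E]
    [Fintype X] [Nonempty X]
    (ρ : (E ≃ₐ[K] E) →* Equiv.Perm X)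
    (N : Subgroup (Equiv.Perm X))
    (htrans : ∀ y z : X, ∃ η ∈ N, η y = z)
    (hcard : Nat.card N = Nat.card X)
    (hnorm : ∀ (g : E ≃ₐ[K] E) (η : Equiv.Perm X), η ∈ N ↔ ρ g * η * (ρ g)⁻¹ ∈ N)
    (f : X → E) (hf : IsGFixedFun ρ f) :
    (∀ m : X → E, ∃ z : MonoidAlgebra E ↥N, permAct N z f = m) ↔
      (∀ m : X → E, IsGFixedFun ρ m →
        ∃ z : MonoidAlgebra E ↥N, IsGFixedAlg ρ N z ∧ permAct N z f = m) := by
  classical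
  haveI : Finite ↥N := inferInstance
  haveI : Module.Finite E (↥N →₀ E) :=
    Module.Finite.equiv (Finsupp.linearEquivFunOnFinite E E ↥N).symm
  haveI : Module.Finite E (MonoidAlgebra E ↥N) := Module.Finite.equiv (MonoidAlgebra.coeffLinearEquiv E).symm
  constructor
  · intro hgen m hm
    have hsurj : Function.Surjective (permActHom (E := E) (X := X) N f) := fun m' => by
      obtain ⟨z, hz⟩ := hgen m'
      exact ⟨z, hz⟩
    obtain ⟨z, hzfix, hzeq⟩ := surjOn_fixedPts (algAct ρ N hnorm) (funAct ρ)
      (algAct_add ρ N hnorm) (algAct_smul ρ N hnorm) (algAct_one ρ N hnorm)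
      (algAct_mul ρ N hnorm)
      (funAct_add ρ) (funAct_smul ρ) (funAct_one ρ) (funAct_mul ρ)
      (permActHom N f) (permActHom_equivariant ρ N hnorm f hf) hsurj m
      ((isGFixedFun_iff ρ m).1 hm)
    exact ⟨z, (isGFixedAlg_iff ρ N hnorm z).2 hzfix, hzeq⟩
  · intro hgen m
    have hspan := span_fixedPts_eq_top (funAct ρ) (funAct_add ρ) (funAct_smul ρ)
      (funAct_one ρ) (funAct_mul ρ)
    have hsub : (fixedPts (funAct ρ) (funAct_add ρ) (funAct_smul ρ) : Set (X → E))
        ⊆ ↑(LinearMap.range (permActHom (E := E) (X := X) N f)) := by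
      intro w hw
      obtain ⟨z, -, hz⟩ := hgen w ((isGFixedFun_iff ρ w).2 hw)
      exact ⟨z, hz⟩
    have htop : LinearMap.range (permActHom (E := E) (X := X) N f) = ⊤ := by
      rw [eq_top_iff, ← hspan]
      exact Submodule.span_le.2 hsub
    obtain ⟨z, hz⟩ := (LinearMap.range_eq_top.1 htop) m
    exact ⟨z, hz⟩
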